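/- Let N ≥ 1 and a be integers with 1 ≤ a ≤ N, and let n, l be nonnegative integers with l ≤ n. Then ∑_{k=l+1}^{n} 2(k + a/N) / ((n−k)! · (2a/N)_{n+k+1}) = (n−l) / ((n−l)! · (2a/N)_{n+l+1}). -/

import Mathlib

open Finset

/-- The Pochhammer symbol (rising factorial) `(x)_n = x(x+1)⋯(x+n−1)`. -/
noncomputable def poch (x : ℝ) (n : ℕ) : ℝ := (ascPochhammer ℝ n).eval x

lemma poch_pos {x : ℝ} (hx : 0 < x) (m : ℕ) : 0 < poch x m :=
  ascPochhammer_pos m x hx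

lemma poch_succ (x : ℝ) (m : ℕ) : poch x (m + 1) = poch x m * (x + m) :=
  ascPochhammer_succ_eval m x

lemma aux_telescope (x : ℝ) (hx : 0 < x) (n : ℕ) :
    ∀ j, j ≤ n → ∑ k ∈ Finset.Icc (n - j + 1) n,
        (2 * (k : ℝ) + x) / ((n - k).factorial * poch x (n + k + 1))
      = (j : ℝ) / ((j.factorial : ℝ) * poch x (n + (n - j) + 1)) := by
  intro j
  induction j with
  | zero =>
      intro _
      simp [Finset.Icc_eq_empty_of_lt (Nat.lt_succ_self n)]
  | succ j ih =>
      intro hj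
      have hj' : j ≤ n := Nat.le_of_succ_le hj
      set l := n - (j + 1) with hl
      have hln : l + (j + 1) = n := Nat.sub_add_cancel hj
      have h1 : n - j = l + 1 := by omega
      have h2 : n - (l + 1) = j := by omega
      have h3 : n + (l + 1) + 1 = (n + l + 1) + 1 := by omega
      have hins : Finset.Icc (l + 1) n = insert (l + 1) (Finset.Icc (l + 1 + 1) n) := by
        exact (Finset.insert_Icc_add_one_left_eq_Icc (by omega)).symm
      rw [hins, Finset.sum_insert (by simp)]
      have ihv := ih hj'
      rw [h1] at ihv
      rw [ihv, h2, h3, poch_succ]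
      have hP : poch x (n + l + 1) ≠ 0 := (poch_pos hx _).ne'
      have hA : x + ((n : ℕ) + l + 1 : ℕ) ≠ 0 := by
        push_cast; positivity
      have hjf : (j.factorial : ℝ) ≠ 0 := by positivity
      have hjf1 : ((j + 1).factorial : ℝ) ≠ 0 := by positivity
      have hcast : (n : ℝ) = (l : ℝ) + (j : ℝ) + 1 := by
        have := congrArg (Nat.cast : ℕ → ℝ) hln
        push_cast at this ⊢; linarith
      rw [Nat.factorial_succ]
      push_cast
      rw [hcast]
      field_simp
      ring

/-- Lemma 2.1, formula (2.1): for `1 ≤ a ≤ N` and `l ≤ n`,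
`∑_{k=l+1}^{n} 2(k + a/N) / ((n−k)!·(2a/N)_{n+k+1}) = (n−l)/((n−l)!·(2a/N)_{n+l+1})`. -/
theorem sum_two_mul_add_div_factorial_poch
    (N a : ℕ) (h1 : 1 ≤ a) (h2 : a ≤ N) (n l : ℕ) (hln : l ≤ n) :
    ∑ k ∈ Finset.Icc (l + 1) n,
        2 * ((k : ℝ) + (a : ℝ) / N) /
          ((n - k).factorial * poch (2 * (a : ℝ) / N) (n + k + 1))
      = ((n : ℝ) - l) /
          ((n - l).factorial * poch (2 * (a : ℝ) / N) (n + l + 1)) := by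
  have hN : (0 : ℝ) < N := by
    exact_mod_cast Nat.lt_of_lt_of_le (Nat.lt_of_lt_of_le Nat.zero_lt_one h1) h2
  have hx : 0 < 2 * (a : ℝ) / N := by
    have ha : (0 : ℝ) < a := by exact_mod_cast h1
    positivity
  have key := aux_telescope (2 * (a : ℝ) / N) hx n (n - l) (Nat.sub_le n l)
  have h0 : n - (n - l) = l := Nat.sub_sub_self hln
  rw [h0] at key
  have hc : ((n - l : ℕ) : ℝ) = (n : ℝ) - l := by
    push_cast [hln]; ring
  rw [hc] at key
  rw [← key]
  apply Finset.sum_congr rfl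
  intro k _
  congr 1
  field_simp
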